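/- Let a, b : ℕ → ℝ be sequences of nonnegative reals, let c ≥ 0 and ℓ ≥ 1, and suppose a_k ≤ a_{k−1} + c·b_k for all k ≥ 1. Define φ_k := ∑_{i=kℓ+1}^{(k+1)ℓ} b_i². Then for every n ≥ 1, a_{nℓ}² ≤ 2ⁿ·a_0² + 2·c²·ℓ·∑_{k=0}^{n−1} 2^{n−1−k}·φ_k. -/

import Mathlib

/-- telescoping: `a m ≤ a s + c ∑_{i=s+1}^m b i` -/
theorem sum_window_estimate (a b : ℕ → ℝ) (c : ℝ) (hc : 0 ≤ c)
    (hb : ∀ k, 0 ≤ b k)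
    (hrec : ∀ k ≥ 1, a k ≤ a (k - 1) + c * b k) :
    ∀ s m : ℕ, s ≤ m → a m ≤ a s + c * ∑ i ∈ Finset.Icc (s + 1) m, b i := by
  intro s m
  induction m with
  | zero =>
    intro h
    interval_cases s
    simp
  | succ m ih =>
    intro h
    rcases Nat.lt_or_ge s (m + 1) with hlt | hge
    · have hs : s ≤ m := Nat.lt_succ_iff.mp hlt
      have h1 : a (m + 1) ≤ a m + c * b (m + 1) := by
        have := hrec (m + 1) (Nat.succ_le_succ (Nat.zero_le m))
        simpa using this
      have h2 := ih hs
      rw [Finset.sum_Icc_succ_top (by omega : s + 1 ≤ m + 1)]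
      nlinarith [mul_nonneg hc (hb (m + 1))]
    · have : s = m + 1 := le_antisymm h hge
      subst this
      simp

/-- one-window square estimate -/
theorem one_window (a b : ℕ → ℝ) (ha : ∀ k, 0 ≤ a k) (hb : ∀ k, 0 ≤ b k)
    (c : ℝ) (hc : 0 ≤ c) (l : ℕ)
    (hrec : ∀ k ≥ 1, a k ≤ a (k - 1) + c * b k) (k : ℕ) :
    a ((k + 1) * l) ^ 2 ≤ 2 * a (k * l) ^ 2 +
      2 * c ^ 2 * (l : ℝ) * ∑ i ∈ Finset.Icc (k * l + 1) ((k + 1) * l), b i ^ 2 := by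
  set s := Finset.Icc (k * l + 1) ((k + 1) * l) with hs
  have hle : k * l ≤ (k + 1) * l := Nat.mul_le_mul_right l (Nat.le_succ k)
  have h1 : a ((k + 1) * l) ≤ a (k * l) + c * ∑ i ∈ s, b i :=
    sum_window_estimate a b c hc hb hrec _ _ hle
  have hcard : (s.card : ℝ) ≤ (l : ℝ) := by
    have : s.card ≤ l := by
      rw [hs, Nat.card_Icc]
      have : (k + 1) * l = k * l + l := by ring
      omega
    exact_mod_cast this
  have hcs : (∑ i ∈ s, b i) ^ 2 ≤ (s.card : ℝ) * ∑ i ∈ s, b i ^ 2 :=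
    sq_sum_le_card_mul_sum_sq (s := s) (f := b)
  have hsum_nonneg : 0 ≤ ∑ i ∈ s, b i := Finset.sum_nonneg fun i _ => hb i
  have hsq_nonneg : 0 ≤ ∑ i ∈ s, b i ^ 2 := Finset.sum_nonneg fun i _ => sq_nonneg _
  have h2 : (∑ i ∈ s, b i) ^ 2 ≤ (l : ℝ) * ∑ i ∈ s, b i ^ 2 :=
    hcs.trans (mul_le_mul_of_nonneg_right hcard hsq_nonneg)
  have hA : 0 ≤ a (k * l) := ha _
  have hx : a ((k + 1) * l) * a ((k + 1) * l) ≤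
      (a (k * l) + c * ∑ i ∈ s, b i) * (a (k * l) + c * ∑ i ∈ s, b i) :=
    mul_le_mul h1 h1 (ha _) (by positivity)
  nlinarith [sq_nonneg (a (k * l) - c * ∑ i ∈ s, b i),
    mul_le_mul_of_nonneg_left h2 (sq_nonneg c)]

/-- Iterated conditional estimate for the ECM gradient (Lemma 2.7):
`a_{nℓ}² ≤ 2ⁿ a_0² + 2c²ℓ ∑_{k=0}^{n−1} 2^{n−1−k} φ_k` with
`φ_k = ∑_{i=kℓ+1}^{(k+1)ℓ} b_i²`. -/
theorem iterated_window_estimate (a b : ℕ → ℝ)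
    (ha : ∀ k, 0 ≤ a k) (hb : ∀ k, 0 ≤ b k)
    (c : ℝ) (hc : 0 ≤ c) (l : ℕ) (hl : 1 ≤ l)
    (hrec : ∀ k ≥ 1, a k ≤ a (k - 1) + c * b k) :
    ∀ n : ℕ, 1 ≤ n →
      a (n * l) ^ 2 ≤
        (2 : ℝ) ^ n * a 0 ^ 2 +
          2 * c ^ 2 * (l : ℝ) *
            ∑ k ∈ Finset.range n, (2 : ℝ) ^ (n - 1 - k) *
              ∑ i ∈ Finset.Icc (k * l + 1) ((k + 1) * l), b i ^ 2 := by
  intro n hn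
  induction n with
  | zero => omega
  | succ n ih =>
    rcases Nat.eq_zero_or_pos n with hn0 | hn1
    · subst hn0
      have := one_window a b ha hb c hc l hrec 0
      simpa using this
    · have ihh := ih hn1
      have hw := one_window a b ha hb c hc l hrec n
      have key : a ((n + 1) * l) ^ 2 ≤
          2 * ((2:ℝ) ^ n * a 0 ^ 2 + 2 * c ^ 2 * (l:ℝ) *
            ∑ k ∈ Finset.range n, (2:ℝ) ^ (n - 1 - k) *
              ∑ i ∈ Finset.Icc (k * l + 1) ((k + 1) * l), b i ^ 2) +
          2 * c ^ 2 * (l:ℝ) * ∑ i ∈ Finset.Icc (n * l + 1) ((n + 1) * l), b i ^ 2 := by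
        nlinarith [mul_nonneg (mul_nonneg (mul_nonneg (by norm_num : (0:ℝ) ≤ 2) (sq_nonneg c))
          (Nat.cast_nonneg l)) (Finset.sum_nonneg (fun i (_ : i ∈ Finset.Icc (n * l + 1) ((n + 1) * l)) => sq_nonneg (b i)))]
      refine key.trans ?_
      rw [Finset.sum_range_succ]
      have hpow : ∀ k ∈ Finset.range n,
          (2:ℝ) * ((2:ℝ) ^ (n - 1 - k) *
            ∑ i ∈ Finset.Icc (k * l + 1) ((k + 1) * l), b i ^ 2)
          = (2:ℝ) ^ (n + 1 - 1 - k) *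
            ∑ i ∈ Finset.Icc (k * l + 1) ((k + 1) * l), b i ^ 2 := by
        intro k hk
        have hk' : k < n := Finset.mem_range.mp hk
        have : n + 1 - 1 - k = (n - 1 - k) + 1 := by omega
        rw [this, pow_succ]
        ring
      have hmulsum : (2:ℝ) * ∑ k ∈ Finset.range n, (2:ℝ) ^ (n - 1 - k) *
            ∑ i ∈ Finset.Icc (k * l + 1) ((k + 1) * l), b i ^ 2
          = ∑ k ∈ Finset.range n, (2:ℝ) ^ (n + 1 - 1 - k) *
            ∑ i ∈ Finset.Icc (k * l + 1) ((k + 1) * l), b i ^ 2 := by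
        rw [Finset.mul_sum]
        exact Finset.sum_congr rfl hpow
      have hlast : n + 1 - 1 - n = 0 := by omega
      rw [hlast, pow_zero, one_mul]
      apply le_of_eq
      rw [← hmulsum]
      ring
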